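/- If a mode W partitioning the agent set A is the disjoint union of regular sub-modes W_1, …, W_l, where W_i consists of k_i modalities each of cardinality m_i and the m_i are pairwise distinct, then the complete modal graph KM_W is isomorphic to the Cartesian product KM_{W_1} □ … □ KM_{W_l}, and hence to K_{2^{m_1}}^{□ k_1} □ … □ K_{2^{m_l}}^{□ k_l}. -/

import Mathlib

/-- The complete modal graph of a mode `W` over an agent set `α`. -/
def KM {α : Type*} (W : Finset (Finset α)) : SimpleGraph (α → Bool) where
  Adj b1 b2 := ∃ w ∈ W, (∃ i ∈ w, b1 i ≠ b2 i) ∧ ∀ i ∉ w, b1 i = b2 i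
  symm := by
    constructor
    rintro b1 b2 ⟨w, hw, ⟨i, hi, hne⟩, hout⟩
    exact ⟨w, hw, ⟨i, hi, hne.symm⟩, fun j hj => (hout j hj).symm⟩
  loopless := by constructor; rintro b ⟨w, _, ⟨i, _, hne⟩, _⟩; exact hne rfl

/-- The Cartesian (box) product of a family of graphs: two tuples are adjacent
iff they are adjacent in exactly one coordinate and equal elsewhere. -/
def boxFamily {ι : Type*} {V : ι → Type*} (G : ∀ i, SimpleGraph (V i)) :
    SimpleGraph (∀ i, V i) where
  Adj x y := ∃ i, (G i).Adj (x i) (y i) ∧ ∀ j, j ≠ i → x j = y j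
  symm := by
    constructor
    rintro x y ⟨i, hadj, h⟩
    exact ⟨i, hadj.symm, fun j hj => (h j hj).symm⟩
  loopless := by constructor; rintro x ⟨i, hadj, _⟩; exact (G i).irrefl hadj

/-- The Cartesian product of `k` copies of the complete graph `K_{2^m}`. -/
def completeBoxPow (k m : ℕ) : SimpleGraph (Fin k → (Fin m → Bool)) where
  Adj x y := ∃ j, x j ≠ y j ∧ ∀ i, i ≠ j → x i = y i
  symm := by
    constructor
    rintro x y ⟨j, hne, h⟩
    exact ⟨j, hne.symm, fun i hi => (h i hi).symm⟩
  loopless := by constructor; rintro x ⟨j, hne, _⟩; exact hne rfl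

/-- The support of a sub-mode: the set of agents occurring in its modalities. -/
def modeSupp {n : ℕ} (Wi : Finset (Finset (Fin n))) : Finset (Fin n) :=
  Wi.biUnion id

/-- A sub-mode restricted to the subtype of agents in its support. -/
def restrictMode {n : ℕ} (Wi : Finset (Finset (Fin n))) :
    Finset (Finset {a : Fin n // a ∈ modeSupp Wi}) :=
  Wi.image (fun w => w.subtype (· ∈ modeSupp Wi))

noncomputable def KM_iso_box {α ι : Type*} [DecidableEq α] (p : ι → α → Prop) [∀ i, DecidablePred (p i)]
    (hp : ∀ a, ∃! i, p i a)
    (W : Finset (Finset α)) (Wf : ι → Finset (Finset α))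
    (hWf : ∀ i, ∀ w ∈ Wf i, ∀ a ∈ w, p i a)
    (hW : ∀ w, w ∈ W ↔ ∃ i, w ∈ Wf i) :
    KM W ≃g boxFamily (fun i => KM ((Wf i).image (fun w => w.subtype (p i)))) where
  toEquiv :=
    { toFun := fun b i a => b a.val
      invFun := fun g a => g (hp a).choose ⟨a, (hp a).choose_spec.1⟩
      left_inv := fun b => rfl
      right_inv := by
        intro g
        funext i a
        obtain ⟨a, ha⟩ := a
        have h : i = (hp a).choose := (hp a).choose_spec.2 i ha
        subst h
        rfl }
  map_rel_iff' := by
    intro b1 b2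
    constructor
    · rintro ⟨i, ⟨w', hw', ⟨x, hx, hne⟩, hout⟩, hother⟩
      obtain ⟨w, hw, rfl⟩ := Finset.mem_image.mp hw'
      refine ⟨w, (hW w).mpr ⟨i, hw⟩, ⟨x.val, Finset.mem_subtype.mp hx, hne⟩, ?_⟩
      intro a ha
      obtain ⟨j, hj, -⟩ := hp a
      by_cases h : j = i
      · subst h
        exact hout ⟨a, hj⟩ (fun hmem => ha (Finset.mem_subtype.mp hmem))
      · exact congrFun (hother j h) ⟨a, hj⟩
    · rintro ⟨w, hwW, ⟨x, hx, hne⟩, hout⟩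
      obtain ⟨i, hwi⟩ := (hW w).mp hwW
      have hpx : p i x := hWf i w hwi x hx
      refine ⟨i, ⟨w.subtype (p i), Finset.mem_image_of_mem _ hwi,
        ⟨⟨x, hpx⟩, Finset.mem_subtype.mpr hx, hne⟩, ?_⟩, ?_⟩
      · rintro ⟨a, hpa⟩ hna
        exact hout a (fun haw => hna (Finset.mem_subtype.mpr haw))
      · intro j hj
        funext a
        apply hout
        intro haw
        exact hj ((hp a.val).unique a.property (hWf i w hwi _ haw))

def boxFamilyCongr {ι : Type*} {V V' : ι → Type*} {G : ∀ i, SimpleGraph (V i)}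
    {G' : ∀ i, SimpleGraph (V' i)} (e : ∀ i, G i ≃g G' i) :
    boxFamily G ≃g boxFamily G' where
  toEquiv := Equiv.piCongrRight (fun i => (e i).toEquiv)
  map_rel_iff' := by
    intro x y
    constructor
    · rintro ⟨i, hadj, h⟩
      exact ⟨i, (e i).map_rel_iff.mp hadj, fun j hj => (e j).toEquiv.injective (h j hj)⟩
    · rintro ⟨i, hadj, h⟩
      exact ⟨i, (e i).map_rel_iff.mpr hadj, fun j hj => congrArg (e j) (h j hj)⟩

/-- KM of a mode all of whose modalities are "full" is a complete graph. -/
def KMFullIso {β γ : Type*} (V : Finset (Finset β)) (hne : V.Nonempty)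
    (hfull : ∀ w ∈ V, ∀ x, x ∈ w) (e : β ≃ γ) :
    KM V ≃g (⊤ : SimpleGraph (γ → Bool)) where
  toEquiv := Equiv.arrowCongr e (Equiv.refl Bool)
  map_rel_iff' := by
    intro b1 b2
    simp only [SimpleGraph.top_adj]
    constructor
    · intro h
      have hne2 : b1 ≠ b2 := fun heq => h (by rw [heq])
      have : ∃ x, b1 x ≠ b2 x := by
        by_contra hc; push_neg at hc; exact hne2 (funext hc)
      obtain ⟨x, hx⟩ := this
      obtain ⟨w, hw⟩ := hne
      exact ⟨w, hw, ⟨x, hfull w hw x, hx⟩, fun y hy => absurd (hfull w hw y) hy⟩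
    · rintro ⟨w, hw, ⟨x, -, hx⟩, -⟩
      intro heq
      apply hx
      have := congrFun heq (e x)
      simpa using this
theorem KM_decomposes_over_regular_submodes {n l : ℕ}
    (k m : Fin l → ℕ) (hm : Function.Injective m)
    (Wsub : Fin l → Finset (Finset (Fin n)))
    (W : Finset (Finset (Fin n)))
    (hW : W = Finset.univ.biUnion Wsub)
    (hk : ∀ i, (Wsub i).card = k i)
    (hcard : ∀ i, ∀ w ∈ Wsub i, w.card = m i)
    (hpart : ∀ a : Fin n, ∃! w, w ∈ W ∧ a ∈ w) :
    Nonempty (KM W ≃g boxFamily (fun i => KM (restrictMode (Wsub i)))) ∧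
    Nonempty (KM W ≃g boxFamily (fun i => completeBoxPow (k i) (m i))) := by
  -- every w in some Wsub i is in W
  have hmemW : ∀ i, ∀ w ∈ Wsub i, w ∈ W := by
    intro i w hw
    rw [hW]
    exact Finset.mem_biUnion.mpr ⟨i, Finset.mem_univ i, hw⟩
  -- each agent lies in the support of a unique sub-mode
  have hsupp : ∀ a : Fin n, ∃! i, a ∈ modeSupp (Wsub i) := by
    intro a
    obtain ⟨w, ⟨hwW, haw⟩, huniq⟩ := hpart a
    have hwW' := hwW
    rw [hW] at hwW'
    obtain ⟨i, -, hwi⟩ := Finset.mem_biUnion.mp hwW'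
    refine ⟨i, Finset.mem_biUnion.mpr ⟨w, hwi, haw⟩, ?_⟩
    intro j hj
    obtain ⟨w', hw'j, haw'⟩ := Finset.mem_biUnion.mp hj
    have hww' : w' = w := huniq w' ⟨hmemW j w' hw'j, haw'⟩
    apply hm
    rw [← hcard j w' hw'j, hww', hcard i w hwi]
  -- the first isomorphism
  have iso1 : KM W ≃g boxFamily (fun i => KM (restrictMode (Wsub i))) := by
    refine KM_iso_box (fun i a => a ∈ modeSupp (Wsub i)) hsupp W Wsub ?_ ?_
    · intro i w hw a haw
      exact Finset.mem_biUnion.mpr ⟨w, hw, haw⟩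
    · intro w
      rw [hW]
      simp [Finset.mem_biUnion]
  -- the per-sub-mode isomorphism
  have iso2 : ∀ i, KM (restrictMode (Wsub i)) ≃g completeBoxPow (k i) (m i) := by
    intro i
    have ek : Fin (k i) ≃ {w // w ∈ Wsub i} := ((Wsub i).equivFin.trans (finCongr (hk i))).symm
    let p : Fin (k i) → {a : Fin n // a ∈ modeSupp (Wsub i)} → Prop :=
      fun j a => a.val ∈ (ek j).val
    have hp : ∀ a, ∃! j, p j a := by
      rintro ⟨a, ha⟩
      obtain ⟨w, hw, haw⟩ := Finset.mem_biUnion.mp ha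
      refine ⟨ek.symm ⟨w, hw⟩, ?_, ?_⟩
      · show a ∈ (ek (ek.symm ⟨w, hw⟩)).val
        rw [Equiv.apply_symm_apply]
        exact haw
      · intro j hj
        have hwj : (ek j).val ∈ Wsub i := (ek j).property
        have : (ek j).val = w := by
          obtain ⟨w', ⟨-, -⟩, huniq⟩ := hpart a
          rw [huniq (ek j).val ⟨hmemW i _ hwj, hj⟩, huniq w ⟨hmemW i w hw, haw⟩]
        have : ek j = ⟨w, hw⟩ := Subtype.ext this
        rw [← this, Equiv.symm_apply_apply]
    let Wf : Fin (k i) → Finset (Finset {a : Fin n // a ∈ modeSupp (Wsub i)}) :=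
      fun j => {(ek j).val.subtype (· ∈ modeSupp (Wsub i))}
    have hWf : ∀ j, ∀ w ∈ Wf j, ∀ a ∈ w, p j a := by
      intro j w hw a haw
      rw [Finset.mem_singleton] at hw
      subst hw
      exact Finset.mem_subtype.mp haw
    have hWmem : ∀ w, w ∈ restrictMode (Wsub i) ↔ ∃ j, w ∈ Wf j := by
      intro w
      unfold restrictMode
      rw [Finset.mem_image]
      constructor
      · rintro ⟨v, hv, rfl⟩
        refine ⟨ek.symm ⟨v, hv⟩, ?_⟩
        simp only [Wf, Finset.mem_singleton, Equiv.apply_symm_apply]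
      · rintro ⟨j, hj⟩
        rw [Finset.mem_singleton] at hj
        exact ⟨(ek j).val, (ek j).property, hj.symm⟩
    have iso := KM_iso_box p hp (restrictMode (Wsub i)) Wf hWf hWmem
    have step : ∀ j, KM ((Wf j).image (fun w => w.subtype (p j))) ≃g
        (⊤ : SimpleGraph (Fin (m i) → Bool)) := by
      intro j
      have hwj : (ek j).val ∈ Wsub i := (ek j).property
      have esub : {a : {a : Fin n // a ∈ modeSupp (Wsub i)} // p j a} ≃
          {b : Fin n // b ∈ (ek j).val} :=
        { toFun := fun x => ⟨x.1.1, x.2⟩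
          invFun := fun b => ⟨⟨b.1, Finset.mem_biUnion.mpr ⟨(ek j).val, hwj, b.2⟩⟩, b.2⟩
          left_inv := fun x => rfl
          right_inv := fun b => rfl }
      refine KMFullIso _ ?_ ?_ (esub.trans ((ek j).val.equivFin.trans (finCongr (hcard i _ hwj))))
      · exact Finset.image_nonempty.mpr (Finset.singleton_nonempty _)
      · intro w hw x
        rw [Finset.mem_image] at hw
        obtain ⟨v, hv, rfl⟩ := hw
        rw [Finset.mem_singleton] at hv
        subst hv
        refine Finset.mem_subtype.mpr (Finset.mem_subtype.mpr x.property)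
    have boxTop : boxFamily (fun _ : Fin (k i) => (⊤ : SimpleGraph (Fin (m i) → Bool))) ≃g
        completeBoxPow (k i) (m i) :=
      { toEquiv := Equiv.refl _
        map_rel_iff' := Iff.rfl }
    exact iso.trans ((boxFamilyCongr step).trans boxTop)
  exact ⟨⟨iso1⟩, ⟨iso1.trans (boxFamilyCongr iso2)⟩⟩
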